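/- Let φ be a 3CNF formula with clauses C₁,…,C_m over variables var₁,…,var_n, and suppose ξ=⟨f₁,f₂,f₃,f₄⟩ is a positional distributed strategy on 𝒢(φ) that is reachability-winning from (S,S,S,S) to (var₁,var₁,var₁,OK₀). Then the truth assignment A defined by A(var_j)=true if f₁(var_j)=T_{var_j} and A(var_j)=false if f₁(var_j)=F_{var_j} satisfies φ. -/

import Mathlib

namespace DGame

/-- A literal: a variable index together with a sign (`true` = positive literal). -/
abbrev Lit (n : ℕ) := Fin n × Bool

/-- A 3CNF clause: three literals. -/
abbrev Clause (n : ℕ) := Lit n × Lit n × Lit n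

/-- A 3CNF formula `φ` with `m` clauses `C₁,…,C_m` over `n` variables `var₁,…,var_n`. -/
abbrev CNF (m n : ℕ) := Fin m → Clause n

/-- Evaluation of a clause under a truth assignment. -/
def Clause.eval {n : ℕ} (A : Fin n → Bool) (c : Clause n) : Bool :=
  (A c.1.1 == c.1.2) || (A c.2.1.1 == c.2.1.2) || (A c.2.2.1 == c.2.2.2)

/-- `A` is a satisfying truth assignment for `φ`. -/
def CNF.Sat {m n : ℕ} (φ : CNF m n) (A : Fin n → Bool) : Prop :=
  ∀ i, Clause.eval A (φ i) = true

/-- Truth of clause `c` under an assignment `(a₁,a₂,a₃) ∈ {T,F}³` of its three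
(literal positions') variables. -/
def Clause.evalTriple {n : ℕ} (c : Clause n) (a : Bool × Bool × Bool) : Bool :=
  (a.1 == c.1.2) || (a.2.1 == c.2.1.2) || (a.2.2 == c.2.2.2)

/-- Vertices of the local games `G₁, G₂, G₃`:
player-0 vertices `var j`, player-1 vertices `S`, `T j`, `F j`. -/
inductive LV (n : ℕ) : Type
  | var (j : Fin n)
  | S
  | T (j : Fin n)
  | F (j : Fin n)
  deriving DecidableEq, Fintype

/-- Player-0 vertices of `G₁, G₂, G₃`. -/
def LV.IsP0 {n : ℕ} : LV n → Prop
  | .var _ => True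
  | _ => False

/-- Local edges of `G₁, G₂, G₃`: `(var j, T j)` and `(var j, F j)`. -/
inductive LE {n : ℕ} : LV n → LV n → Prop
  | toT (j : Fin n) : LE (.var j) (.T j)
  | toF (j : Fin n) : LE (.var j) (.F j)

/-- Vertices of the local game `G₄`:
player-0 vertices `OK₀, NO₀, v_{j,0}`, player-1 vertices `S, OK₁, NO₁, v_{j,1}`
(for `j = 1..m+n`). -/
inductive LV4 (m n : ℕ) : Type
  | OK0
  | NO0
  | v0 (j : Fin (m + n))
  | S
  | OK1
  | NO1
  | v1 (j : Fin (m + n))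
  deriving DecidableEq, Fintype

/-- Player-0 vertices of `G₄`. -/
def LV4.IsP0 {m n : ℕ} : LV4 m n → Prop
  | .OK0 => True
  | .NO0 => True
  | .v0 _ => True
  | _ => False

/-- Local edges of `G₄`: `(v_{j,0}, v_{j,1})`, `(OK₀, OK₁)`, `(NO₀, NO₁)`. -/
inductive LE4 {m n : ℕ} : LV4 m n → LV4 m n → Prop
  | mid (j : Fin (m + n)) : LE4 (.v0 j) (.v1 j)
  | ok : LE4 .OK0 .OK1
  | no : LE4 .NO0 .NO1

/-- Global vertices of the distributed game `𝒢(φ)`. -/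
abbrev GV (m n : ℕ) := LV n × LV n × LV n × LV4 m n

/-- `𝒱₁`: global player-1 vertices (all components are local player-1 vertices).
All other global vertices form `𝒱₀`. -/
def GV.IsP1 {m n : ℕ} (x : GV m n) : Prop :=
  ¬ x.1.IsP0 ∧ ¬ x.2.1.IsP0 ∧ ¬ x.2.2.1.IsP0 ∧ ¬ x.2.2.2.IsP0

/-- The vertex `T j` or `F j` of `G₁,G₂,G₃` according to a boolean. -/
def tf {n : ℕ} (a : Bool) (j : Fin n) : LV n := if a then .T j else .F j

/-- The initial state `(S,S,S,S)`. -/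
def start (m n : ℕ) : GV m n := (.S, .S, .S, .S)

/-- The target state `(var₁, var₁, var₁, OK₀)`. -/
def tgt (m n : ℕ) [NeZero n] : GV m n := (.var 0, .var 0, .var 0, .OK0)

/-- The losing state `(var₁, var₁, var₁, NO₀)`. -/
def sink (m n : ℕ) [NeZero n] : GV m n := (.var 0, .var 0, .var 0, .NO0)

/-- The prescribed player-1 edges of the reduction game `𝒢(φ)` (types 1–5).
For the clause `Cᵢ`, the index of `v_i` in `G₄` is `i.castAdd n`; for the
variable `var_j` the index of `v_{m+j}` is `Fin.natAdd m j`. -/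
inductive E1 {m n : ℕ} [NeZero n] (φ : CNF m n) : GV m n → GV m n → Prop
  /-- (type 1) intention to check satisfaction of clause `Cᵢ`. -/
  | type1 (i : Fin m) :
      E1 φ (start m n)
        (.var (φ i).1.1, .var (φ i).2.1.1, .var (φ i).2.2.1, .v0 (i.castAdd n))
  /-- (type 2) intention to check consistency of variable `var_j`. -/
  | type2 (j : Fin n) :
      E1 φ (start m n) (.var j, .var j, .var j, .v0 (Fin.natAdd m j))
  /-- (type 3a) an assignment making clause `Cᵢ` true leads to the target. -/
  | type3a (i : Fin m) (a : Bool × Bool × Bool)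
      (h : Clause.evalTriple (φ i) a = true) :
      E1 φ (tf a.1 (φ i).1.1, tf a.2.1 (φ i).2.1.1, tf a.2.2 (φ i).2.2.1,
            .v1 (i.castAdd n)) (tgt m n)
  /-- (type 3b) an assignment making clause `Cᵢ` false leads to `NO₀`. -/
  | type3b (i : Fin m) (a : Bool × Bool × Bool)
      (h : Clause.evalTriple (φ i) a = false) :
      E1 φ (tf a.1 (φ i).1.1, tf a.2.1 (φ i).2.1.1, tf a.2.2 (φ i).2.2.1,
            .v1 (i.castAdd n)) (sink m n)
  /-- (type 4a) consistent choices `(T,T,T)` or `(F,F,F)` lead to the target. -/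
  | type4a (j : Fin n) (a : Bool) :
      E1 φ (tf a j, tf a j, tf a j, .v1 (Fin.natAdd m j)) (tgt m n)
  /-- (type 4b) the six mixed combinations lead to `NO₀`. -/
  | type4b (j : Fin n) (a : Bool × Bool × Bool)
      (h : ¬ (a.1 = a.2.1 ∧ a.2.1 = a.2.2)) :
      E1 φ (tf a.1 j, tf a.2.1 j, tf a.2.2 j, .v1 (Fin.natAdd m j)) (sink m n)
  /-- (type 5) continuous execution, `OK₁` side. -/
  | type5ok (j : Fin n) (a : Bool × Bool × Bool) :
      E1 φ (tf a.1 j, tf a.2.1 j, tf a.2.2 j, .OK1) (tgt m n)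
  /-- (type 5) continuous execution, `NO₁` side. -/
  | type5no (j : Fin n) (a : Bool × Bool × Bool) :
      E1 φ (tf a.1 j, tf a.2.1 j, tf a.2.2 j, .NO1) (sink m n)

/-- One-component step for player 0 in `G₁,G₂,G₃`: a player-0 component moves
along a local edge, a player-1 component stays put. -/
def lstep {n : ℕ} : LV n → LV n → Prop
  | .var j, v' => LE (.var j) v'
  | v, v' => v' = v

/-- One-component step for player 0 in `G₄`. -/
def lstep4 {m n : ℕ} : LV4 m n → LV4 m n → Prop
  | .OK0, v' => LE4 .OK0 v'
  | .NO0, v' => LE4 .NO0 v'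
  | .v0 j, v' => LE4 (.v0 j) v'
  | v, v' => v' = v

/-- The global edge relation `ℰ` of `𝒢(φ)`: from a player-1 vertex the
prescribed edges, from a player-0 vertex the componentwise moves. -/
def GE {m n : ℕ} [NeZero n] (φ : CNF m n) (x y : GV m n) : Prop :=
  (x.IsP1 ∧ E1 φ x y) ∨
  (¬ x.IsP1 ∧ lstep x.1 y.1 ∧ lstep x.2.1 y.2.1 ∧ lstep x.2.2.1 y.2.2.1 ∧
    lstep4 x.2.2.2 y.2.2.2)

/-- A positional distributed strategy `ξ = ⟨f₁,f₂,f₃,f₄⟩` for player 0: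
each `fᵢ` maps player-0 local vertices along local edges. -/
structure Strat (m n : ℕ) where
  f1 : LV n → LV n
  f2 : LV n → LV n
  f3 : LV n → LV n
  f4 : LV4 m n → LV4 m n
  h1 : ∀ j : Fin n, LE (.var j) (f1 (.var j))
  h2 : ∀ j : Fin n, LE (.var j) (f2 (.var j))
  h3 : ∀ j : Fin n, LE (.var j) (f3 (.var j))
  h4 : ∀ v : LV4 m n, v.IsP0 → LE4 v (f4 v)

/-- `x` has a successor in `𝒢(φ)`. -/
def HasSucc {m n : ℕ} [NeZero n] (φ : CNF m n) (x : GV m n) : Prop :=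
  ∃ y, GE φ x y

/-- A (maximal) play of `𝒢(φ)`, encoded as an infinite sequence which follows
edges of the game and stutters forever once a dead-end vertex is reached. -/
def IsPlay {m n : ℕ} [NeZero n] (φ : CNF m n) (π : ℕ → GV m n) : Prop :=
  ∀ k, (HasSucc φ (π k) → GE φ (π k) (π (k + 1))) ∧
       (¬ HasSucc φ (π k) → π (k + 1) = π k)

/-- The play `π` is consistent with the positional distributed strategy `ξ`:
at every player-0 vertex, every component in a local player-0 position moves
as prescribed by the corresponding local strategy. -/
def Consistent {m n : ℕ} (ξ : Strat m n) (π : ℕ → GV m n) : Prop :=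
  ∀ k, ¬ (π k).IsP1 →
    ((π k).1.IsP0 → (π (k + 1)).1 = ξ.f1 (π k).1) ∧
    ((π k).2.1.IsP0 → (π (k + 1)).2.1 = ξ.f2 (π k).2.1) ∧
    ((π k).2.2.1.IsP0 → (π (k + 1)).2.2.1 = ξ.f3 (π k).2.2.1) ∧
    ((π k).2.2.2.IsP0 → (π (k + 1)).2.2.2 = ξ.f4 (π k).2.2.2)

/-- `ξ` is reachability-winning from `init` to `goal`: every play starting at
`init` and consistent with `ξ` visits `goal`. -/
def Winning {m n : ℕ} [NeZero n] (φ : CNF m n) (ξ : Strat m n)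
    (init goal : GV m n) : Prop :=
  ∀ π : ℕ → GV m n, IsPlay φ π → Consistent ξ π → π 0 = init → ∃ k, π k = goal


section Aux

variable {m n : ℕ} [NeZero n] {φ : CNF m n} {ξ : Strat m n}

lemma tf_of_LE {j : Fin n} {v : LV n} (h : LE (.var j) v) :
    v = tf (if v = LV.T j then true else false) j := by
  cases h <;> simp [tf]

lemma notP0_of_LE {j : Fin n} {v : LV n} (h : LE (.var j) v) : ¬ v.IsP0 := by
  cases h <;> simp [LV.IsP0]

lemma le4_from_v0 {ι : Fin (m + n)} {w : LV4 m n} (h : LE4 (.v0 ι) w) :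
    w = .v1 ι := by cases h; rfl

lemma le4_from_NO0 {w : LV4 m n} (h : LE4 .NO0 w) : w = .NO1 := by cases h; rfl

lemma f4_v0 (ξ : Strat m n) (ι : Fin (m + n)) : ξ.f4 (.v0 ι) = .v1 ι :=
  le4_from_v0 (ξ.h4 (.v0 ι) trivial)

lemma f4_NO0 (ξ : Strat m n) : ξ.f4 .NO0 = .NO1 :=
  le4_from_NO0 (ξ.h4 .NO0 trivial)

lemma isPlay_of_steps (π : ℕ → GV m n) (h : ∀ k, GE φ (π k) (π (k + 1))) :
    IsPlay φ π := fun k => ⟨fun _ => h k, fun hn => absurd ⟨_, h k⟩ hn⟩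

lemma start_isP1 : (start m n).IsP1 := by
  exact ⟨fun h => h, fun h => h, fun h => h, fun h => h⟩

lemma x2_isP1 (a b c : Fin n) (ι : Fin (m + n)) :
    (GV.IsP1 (ξ.f1 (.var a), ξ.f2 (.var b), ξ.f3 (.var c), (.v1 ι : LV4 m n))) :=
  ⟨notP0_of_LE (ξ.h1 a), notP0_of_LE (ξ.h2 b), notP0_of_LE (ξ.h3 c), fun h => h⟩

lemma q_isP1 :
    (GV.IsP1 (ξ.f1 (.var 0), ξ.f2 (.var 0), ξ.f3 (.var 0), (.NO1 : LV4 m n))) :=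
  ⟨notP0_of_LE (ξ.h1 0), notP0_of_LE (ξ.h2 0), notP0_of_LE (ξ.h3 0), fun h => h⟩

lemma e_q_sink :
    E1 φ (ξ.f1 (.var 0), ξ.f2 (.var 0), ξ.f3 (.var 0), (.NO1 : LV4 m n))
      (sink m n) := by
  rw [tf_of_LE (ξ.h1 0), tf_of_LE (ξ.h2 0), tf_of_LE (ξ.h3 0)]
  exact E1.type5no 0 (_, _, _)

/-- The adversarial losing play. -/
def losePlay (ξ : Strat m n) (a b c : Fin n) (ι : Fin (m + n)) : ℕ → GV m n
  | 0 => start m n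
  | 1 => (.var a, .var b, .var c, .v0 ι)
  | 2 => (ξ.f1 (.var a), ξ.f2 (.var b), ξ.f3 (.var c), .v1 ι)
  | (k + 3) => if k % 2 = 0 then sink m n
               else (ξ.f1 (.var 0), ξ.f2 (.var 0), ξ.f3 (.var 0), .NO1)

lemma losing_contra (hwin : Winning φ ξ (start m n) (tgt m n))
    (a b c : Fin n) (ι : Fin (m + n))
    (e1 : E1 φ (start m n) (.var a, .var b, .var c, .v0 ι))
    (e2 : E1 φ (ξ.f1 (.var a), ξ.f2 (.var b), ξ.f3 (.var c), .v1 ι) (sink m n)) :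
    False := by
  set π := losePlay ξ a b c ι with hπ
  have hq : ∀ k, k % 2 = 1 →
      π (k + 3) = (ξ.f1 (.var 0), ξ.f2 (.var 0), ξ.f3 (.var 0), .NO1) := by
    intro k hk
    simp [hπ, losePlay, hk]
  have hs : ∀ k, k % 2 = 0 → π (k + 3) = sink m n := by
    intro k hk
    simp [hπ, losePlay, hk]
  have hstep : ∀ k, GE φ (π k) (π (k + 1)) := by
    intro k
    match k with
    | 0 => exact Or.inl ⟨start_isP1, e1⟩
    | 1 =>
      refine Or.inr ⟨fun h => h.1 trivial, ξ.h1 a, ξ.h2 b, ξ.h3 c, ?_⟩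
      exact LE4.mid ι
    | 2 =>
      have : π 3 = sink m n := hs 0 rfl
      rw [this]
      exact Or.inl ⟨x2_isP1 a b c ι, e2⟩
    | (k + 3) =>
      rcases Nat.mod_two_eq_zero_or_one k with hk | hk
      · rw [hs k hk, hq (k + 1) (by omega)]
        exact Or.inr ⟨fun h => h.1 trivial, ξ.h1 0, ξ.h2 0, ξ.h3 0, LE4.no⟩
      · rw [hq k hk, show (k + 1) + 3 = (k + 1) + 3 from rfl, hs (k + 1) (by omega)]
        exact Or.inl ⟨q_isP1, e_q_sink⟩
  have hcons : Consistent ξ π := by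
    intro k hk
    match k with
    | 0 => exact absurd start_isP1 hk
    | 1 =>
      refine ⟨fun _ => rfl, fun _ => rfl, fun _ => rfl, fun _ => ?_⟩
      show (LV4.v1 ι : LV4 m n) = ξ.f4 (.v0 ι)
      rw [f4_v0]
    | 2 => exact absurd (x2_isP1 a b c ι) hk
    | (k + 3) =>
      rcases Nat.mod_two_eq_zero_or_one k with h2 | h2
      · rw [hs k h2] at hk ⊢
        rw [hq (k + 1) (by omega)]
        refine ⟨fun _ => rfl, fun _ => rfl, fun _ => rfl, fun _ => ?_⟩
        show (LV4.NO1 : LV4 m n) = ξ.f4 .NO0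
        rw [f4_NO0]
      · rw [hq k h2] at hk
        exact absurd q_isP1 hk
  obtain ⟨k, hk⟩ := hwin π (isPlay_of_steps π hstep) hcons rfl
  match k with
  | 0 => exact absurd (congrArg (fun x => x.2.2.2) hk) (by simp [hπ, losePlay, start, tgt, sink])
  | 1 => exact absurd (congrArg (fun x => x.2.2.2) hk) (by simp [hπ, losePlay, start, tgt, sink])
  | 2 => exact absurd (congrArg (fun x => x.2.2.2) hk) (by simp [hπ, losePlay, start, tgt, sink])
  | (k + 3) =>
    rcases Nat.mod_two_eq_zero_or_one k with h2 | h2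
    · rw [hs k h2] at hk
      exact absurd (congrArg (fun x => x.2.2.2) hk) (by simp [hπ, losePlay, start, tgt, sink])
    · rw [hq k h2] at hk
      exact absurd (congrArg (fun x => x.2.2.2) hk) (by simp [hπ, losePlay, start, tgt, sink])

lemma strat_consistent (hwin : Winning φ ξ (start m n) (tgt m n)) (j : Fin n) :
    ξ.f2 (.var j) = ξ.f1 (.var j) ∧ ξ.f3 (.var j) = ξ.f1 (.var j) := by
  set b1 := (if ξ.f1 (.var j) = LV.T j then true else false) with hb1
  set b2 := (if ξ.f2 (.var j) = LV.T j then true else false) with hb2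
  set b3 := (if ξ.f3 (.var j) = LV.T j then true else false) with hb3
  have h1 : ξ.f1 (.var j) = tf b1 j := tf_of_LE (ξ.h1 j)
  have h2 : ξ.f2 (.var j) = tf b2 j := tf_of_LE (ξ.h2 j)
  have h3 : ξ.f3 (.var j) = tf b3 j := tf_of_LE (ξ.h3 j)
  by_cases hcc : b1 = b2 ∧ b2 = b3
  · rw [h1, h2, h3, hcc.1, hcc.2]
    exact ⟨rfl, rfl⟩
  · exfalso
    refine losing_contra hwin j j j (Fin.natAdd m j) (E1.type2 j) ?_
    rw [h1, h2, h3]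
    exact E1.type4b j (b1, b2, b3) hcc

end Aux

/-- If `ξ = ⟨f₁,f₂,f₃,f₄⟩` is a positional distributed
strategy on `𝒢(φ)` which is reachability-winning from `(S,S,S,S)` to
`(var₁,var₁,var₁,OK₀)`, then the assignment `A(var_j) = true` iff
`f₁(var_j) = T_j` (and `false` if `f₁(var_j) = F_j`) satisfies `φ`. -/
theorem winning_strategy_yields_satisfying_assignment
    {m n : ℕ} [NeZero n] (φ : CNF m n) (ξ : Strat m n)
    (hwin : Winning φ ξ (start m n) (tgt m n)) :
    CNF.Sat φ (fun j => if ξ.f1 (.var j) = LV.T j then true else false) := by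
  set A : Fin n → Bool := fun j => if ξ.f1 (.var j) = LV.T j then true else false
    with hA
  intro i
  set a := (φ i).1.1 with ha
  set b := (φ i).2.1.1 with hb
  set c := (φ i).2.2.1 with hc
  have h1 : ξ.f1 (.var a) = tf (A a) a := tf_of_LE (ξ.h1 a)
  have h2 : ξ.f2 (.var b) = tf (A b) b := by
    rw [(strat_consistent hwin b).1]; exact tf_of_LE (ξ.h1 b)
  have h3 : ξ.f3 (.var c) = tf (A c) c := by
    rw [(strat_consistent hwin c).2]; exact tf_of_LE (ξ.h1 c)
  have key : Clause.evalTriple (φ i) (A a, A b, A c) = true := by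
    by_contra hfalse
    have hfalse' : Clause.evalTriple (φ i) (A a, A b, A c) = false :=
      Bool.eq_false_iff.mpr hfalse
    refine losing_contra hwin a b c (i.castAdd n) (E1.type1 i) ?_
    rw [h1, h2, h3]
    exact E1.type3b i (A a, A b, A c) hfalse'
  exact key

end DGame
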